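/- Let m be a Herglotz–Nevanlinna function with integral representation m(z) = a + bz + ∫ (1/(λ−z) − λ/(1+λ²)) dρ(λ). If the moments of ρ exist up to order 2K, then −m(z) = s_{−2}z + s_{−1} + Σ_{k=0}^{2K} s_k z^{−k−1} + o(|z|^{−2K−1}) as |z| → ∞ along the imaginary axis, where s_{−2} = −b, s_{−1} = ∫ λ/(1+λ²) dρ(λ) − a, and s_k = ∫ λ^k dρ(λ). -/

import Mathlib

open MeasureTheory Filter Complex

lemma geom_aux (x z : ℂ) (hz : z ≠ 0) (hxz : x - z ≠ 0) (n : ℕ) :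
    (x - z)⁻¹ + ∑ j ∈ Finset.range (n + 1), x ^ j / z ^ (j + 1) =
      x ^ (n + 1) / (z ^ (n + 1) * (x - z)) := by
  induction n with
  | zero =>
    rw [Finset.range_one, Finset.sum_singleton]
    field_simp
    try ring
  | succ n ih =>
    rw [Finset.sum_range_succ, ← add_assoc, ih]
    field_simp
    ring

set_option maxHeartbeats 1000000 in
theorem stmt_8 (m : ℂ → ℂ) (a b : ℝ) (hb : 0 ≤ b) (ρ : Measure ℝ) (K : ℕ)
    (hgrow : Integrable (fun l : ℝ => 1 / (1 + l ^ 2)) ρ)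
    (hherglotz : (∀ z : ℂ, 0 < z.im → 0 ≤ (m z).im) ∧
      ∀ z : ℂ, z.im ≠ 0 → m (starRingEnd ℂ z) = starRingEnd ℂ (m z))
    (hrep : ∀ z : ℂ, z.im ≠ 0 →
      m z = (a : ℂ) + (b : ℂ) * z +
        ∫ l : ℝ, (((l : ℂ) - z)⁻¹ - (l : ℂ) / (1 + (l : ℂ) ^ 2)) ∂ρ)
    (hmom : ∀ j ≤ 2 * K, Integrable (fun l : ℝ => |l| ^ j) ρ) :
    Tendsto (fun η : ℝ =>
      (Complex.I * (η : ℂ)) ^ (2 * K + 1) *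
        (-(m (Complex.I * (η : ℂ))) -
          (((-b : ℝ) : ℂ) * (Complex.I * (η : ℂ)) +
            (((∫ l : ℝ, l / (1 + l ^ 2) ∂ρ) - a : ℝ) : ℂ) +
            ∑ j ∈ Finset.range (2 * K + 1),
              ((∫ l : ℝ, l ^ j ∂ρ : ℝ) : ℂ) / (Complex.I * (η : ℂ)) ^ (j + 1))))
      atTop (nhds 0) := by
  -- ρ is a finite measure
  have hone : Integrable (fun _ : ℝ => (1 : ℝ)) ρ := by
    simpa using hmom 0 (by omega)
  have hfin : IsFiniteMeasure ρ := by
    rcases (integrable_const_iff).mp hone with h | h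
    · exact absurd h one_ne_zero
    · exact h
  -- integrability of complex powers
  have hintpow : ∀ j ≤ 2 * K, Integrable (fun l : ℝ => (l : ℂ) ^ j) ρ := by
    intro j hj
    refine (hmom j hj).mono' ?_ ?_
    · exact Continuous.aestronglyMeasurable (by continuity)
    · refine Eventually.of_forall fun l => ?_
      rw [norm_pow, Complex.norm_real, Real.norm_eq_abs]
  -- the tendsto part, via dominated convergence
  have htend : Tendsto
      (fun η : ℝ => ∫ l : ℝ, (l : ℂ) ^ (2 * K + 1) / ((l : ℂ) - Complex.I * (η : ℂ)) ∂ρ)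
      atTop (nhds 0) := by
    have h0 : (0 : ℂ) = ∫ l : ℝ, (0 : ℂ) ∂ρ := by simp
    rw [h0]
    apply tendsto_integral_filter_of_dominated_convergence (fun l : ℝ => |l| ^ (2 * K))
    · filter_upwards [eventually_ge_atTop (1 : ℝ)] with η hη
      have hden : ∀ l : ℝ, (l : ℂ) - Complex.I * (η : ℂ) ≠ 0 := by
        intro l h
        have := congrArg Complex.im h
        simp at this
        linarith
      exact (Continuous.div (by continuity) (by continuity) hden).aestronglyMeasurable
    · filter_upwards [eventually_ge_atTop (1 : ℝ)] with η hη
      refine Eventually.of_forall fun l => ?_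
      rcases eq_or_ne l 0 with h | h
      · simp [h]
      · have hl : (0:ℝ) < |l| := abs_pos.mpr h
        have hle : |l| ≤ ‖(l : ℂ) - Complex.I * (η : ℂ)‖ := by
          have := Complex.abs_re_le_norm ((l : ℂ) - Complex.I * (η : ℂ))
          simpa using this
        rw [norm_div, norm_pow, Complex.norm_real, Real.norm_eq_abs]
        calc |l| ^ (2*K+1) / ‖(l : ℂ) - Complex.I * (η : ℂ)‖
            ≤ |l| ^ (2*K+1) / |l| := by
              apply div_le_div_of_nonneg_left (by positivity) hl hle
          _ = |l| ^ (2*K) := by rw [pow_succ, mul_div_assoc, div_self hl.ne', mul_one]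
    · exact hmom (2*K) le_rfl
    · refine Eventually.of_forall fun l => ?_
      apply squeeze_zero_norm' (a := fun η : ℝ => |l| ^ (2*K+1) / η)
      · filter_upwards [eventually_ge_atTop (1 : ℝ)] with η hη
        have hη0 : (0:ℝ) < η := by linarith
        have hle : η ≤ ‖(l : ℂ) - Complex.I * (η : ℂ)‖ := by
          have := Complex.abs_im_le_norm ((l : ℂ) - Complex.I * (η : ℂ))
          simpa [abs_of_pos hη0] using this
        rw [norm_div, norm_pow, Complex.norm_real, Real.norm_eq_abs]
        exact div_le_div_of_nonneg_left (by positivity) hη0 hle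
      · exact Tendsto.div_atTop tendsto_const_nhds tendsto_id
  -- the given function agrees eventually with - the above integral
  have hneg : Tendsto
      (fun η : ℝ => -∫ l : ℝ, (l : ℂ) ^ (2 * K + 1) / ((l : ℂ) - Complex.I * (η : ℂ)) ∂ρ)
      atTop (nhds 0) := by simpa using htend.neg
  refine hneg.congr' ?_
  filter_upwards [eventually_ge_atTop (1 : ℝ)] with η hη
  set z : ℂ := Complex.I * (η : ℂ) with hzdef
  have hη0 : (0:ℝ) < η := by linarith
  have hzim : z.im = η := by simp [hzdef]
  have hz0 : z ≠ 0 := by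
    intro h; rw [h] at hzim; simp at hzim; linarith
  have hlz : ∀ l : ℝ, (l : ℂ) - z ≠ 0 := by
    intro l h
    have := congrArg Complex.im h
    simp [hzdef] at this
    linarith
  -- integrability of the inverse
  have hcont_inv : Continuous fun l : ℝ => ((l : ℂ) - z)⁻¹ :=
    Continuous.inv₀ (by continuity) hlz
  have hint_inv : Integrable (fun l : ℝ => ((l : ℂ) - z)⁻¹) ρ := by
    refine (integrable_const (η⁻¹ : ℝ)).mono' hcont_inv.aestronglyMeasurable ?_
    refine Eventually.of_forall fun l => ?_
    rw [norm_inv]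
    have hle : η ≤ ‖(l : ℂ) - z‖ := by
      have := Complex.abs_im_le_norm ((l : ℂ) - z)
      simpa [hzdef, abs_of_pos hη0] using this
    exact inv_anti₀ hη0 hle
  -- the real fraction is integrable and matches the complex one
  have hfrac_eq : ∀ l : ℝ, (l : ℂ) / (1 + (l : ℂ) ^ 2) = ((l / (1 + l ^ 2) : ℝ) : ℂ) := by
    intro l; push_cast; ring
  have hreal_frac : Integrable (fun l : ℝ => l / (1 + l ^ 2)) ρ := by
    refine (integrable_const (1 : ℝ)).mono' ?_ ?_
    · exact (Continuous.div continuous_id (continuous_const.add (continuous_pow 2))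
        fun l => (show (0:ℝ) < 1 + l ^ 2 by positivity).ne').aestronglyMeasurable
    · refine Eventually.of_forall fun l => ?_
      rw [Real.norm_eq_abs, abs_div, abs_of_pos (show (0:ℝ) < 1 + l^2 by positivity)]
      rw [div_le_iff₀ (by positivity)]
      simp only [norm_one, one_mul]
      nlinarith [abs_nonneg l, _root_.sq_abs l]
  have hint_frac : Integrable (fun l : ℝ => (l : ℂ) / (1 + (l : ℂ) ^ 2)) ρ := by
    rw [show (fun l : ℝ => (l : ℂ) / (1 + (l : ℂ) ^ 2)) = fun l : ℝ => ((l / (1 + l ^ 2) : ℝ) : ℂ)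
      from funext hfrac_eq]
    exact hreal_frac.ofReal
  -- m z with split integrals
  have hmz : m z = (a : ℂ) + (b : ℂ) * z + (∫ l : ℝ, ((l : ℂ) - z)⁻¹ ∂ρ)
      - ((∫ l : ℝ, l / (1 + l ^ 2) ∂ρ : ℝ) : ℂ) := by
    rw [hrep z (by rw [hzim]; exact hη0.ne'), integral_sub hint_inv hint_frac]
    rw [show (fun l : ℝ => (l : ℂ) / (1 + (l : ℂ) ^ 2)) = fun l : ℝ => ((l / (1 + l ^ 2) : ℝ) : ℂ)
      from funext hfrac_eq]
    rw [show (∫ l : ℝ, ((l / (1 + l ^ 2) : ℝ) : ℂ) ∂ρ) = ((∫ l : ℝ, l / (1 + l ^ 2) ∂ρ : ℝ) : ℂ)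
      from integral_ofReal]
    ring
  -- the sum as a single integral
  have hint_sum : Integrable
      (fun l : ℝ => ∑ j ∈ Finset.range (2 * K + 1), (l : ℂ) ^ j / z ^ (j + 1)) ρ :=
    integrable_finset_sum _ fun j hj =>
      (hintpow j (by have := Finset.mem_range.mp hj; omega)).div_const _
  have hsum : (∑ j ∈ Finset.range (2 * K + 1), ((∫ l : ℝ, l ^ j ∂ρ : ℝ) : ℂ) / z ^ (j + 1)) =
      ∫ l : ℝ, (∑ j ∈ Finset.range (2 * K + 1), (l : ℂ) ^ j / z ^ (j + 1)) ∂ρ := by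
    rw [integral_finset_sum _ (fun j hj =>
      (hintpow j (by have := Finset.mem_range.mp hj; omega)).div_const _)]
    refine Finset.sum_congr rfl fun j hj => ?_
    rw [integral_div]
    congr 1
    rw [show ((∫ l : ℝ, l ^ j ∂ρ : ℝ) : ℂ) = ∫ l : ℝ, ((l ^ j : ℝ) : ℂ) ∂ρ
      from integral_ofReal.symm]
    exact integral_congr_ae (Eventually.of_forall fun l => by push_cast; ring)
  -- assemble
  symm
  rw [hmz, hsum]
  have hAS : ∀ A S : ℂ,
      -((a : ℂ) + (b : ℂ) * z + A - ((∫ l : ℝ, l / (1 + l ^ 2) ∂ρ : ℝ) : ℂ)) -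
        (((-b : ℝ) : ℂ) * z + (((∫ l : ℝ, l / (1 + l ^ 2) ∂ρ) - a : ℝ) : ℂ) + S) = -(A + S) := by
    intro A S; push_cast; ring
  rw [hAS, ← integral_add hint_inv hint_sum]
  have heq1 : (fun l : ℝ => ((l : ℂ) - z)⁻¹ + ∑ j ∈ Finset.range (2 * K + 1),
      (l : ℂ) ^ j / z ^ (j + 1)) =
      fun l : ℝ => (l : ℂ) ^ (2 * K + 1) / (z ^ (2 * K + 1) * ((l : ℂ) - z)) :=
    funext fun l => geom_aux _ _ hz0 (hlz l) _
  rw [heq1, mul_neg, ← integral_const_mul]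
  congr 1
  refine integral_congr_ae (Eventually.of_forall fun l => ?_)
  have hzp : z ^ (2 * K + 1) ≠ 0 := pow_ne_zero _ hz0
  simp only []
  rw [mul_div_assoc', mul_div_mul_left _ _ hzp]
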